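/- Let n ≥ 5 and for each 1 ≤ i < j ≤ n let w_{ij} be a word over X_n with c(w_{ij}) = X_n \ {x_i}, and suppose that i_2((w_{ij})^{(pq)}) = i_2((w_{pq})^{(ij)}) for all pairwise distinct i, j, p, q with i < j and p < q, and i_2((w_{ij})^{(jk)}) = i_2((w_{jk})^{(ik)}) = i_2((w_{ik})^{(jk)}) for all i < j < k (i.e. {w_{ij}} is an essential n-scheme of words for the variety of left regular bands, in which an identity u ≈ v holds if and only if i_2(u) = i_2(v)). Then there exists a unique permutation π of {1,…,n} such that for all 1 ≤ i < j ≤ n, i_2(w_{ij}) = x_{α_1}⋯x_{α_{n−1}}, where the sequence (α_1,…,α_{n−1}) is obtained from (π(1),…,π(n)) by replacing the entry i by j and then deleting the rightmost of the two resulting occurrences of j. Moreover, if w is a word over X_n such that i_2(w^{(ij)}) = i_2(w_{ij}) for all 1 ≤ i < j ≤ n, then i_2(w) = x_{π(1)}⋯x_{π(n)}. -/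

import Mathlib

/-! ### Words and word functions -/

/-- The word `w^{(i j)}`: replace every occurrence of the letter `i` by `j`. -/
def subst {X : Type*} [DecidableEq X] (w : List X) (i j : X) : List X :=
  w.map fun t => if t = i then j else t

/-- The prefix `s(w)`: the longest prefix of `w` containing all but one of the
letters of `c(w)` (the empty word if `w` is empty). -/
def wordS {X : Type*} [DecidableEq X] (w : List X) : List X :=
  w.take (w.toFinset.sup fun x => w.idxOf x)

/-- The letter `σ(w)` (the last letter of `w` to occur from the left), as a word of
length at most one; `s(w) ++ σ(w)` is the shortest prefix of `w` with full content. -/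
def wordSigma {X : Type*} [DecidableEq X] (w : List X) : List X :=
  (w.drop (w.toFinset.sup fun x => w.idxOf x)).take 1

/-- The suffix `e(w)`, dual to `s(w)`. -/
def wordE {X : Type*} [DecidableEq X] (w : List X) : List X :=
  (wordS w.reverse).reverse

/-- The letter `ε(w)` (as a word of length at most one), dual to `σ(w)`. -/
def wordEps {X : Type*} [DecidableEq X] (w : List X) : List X :=
  (wordSigma w.reverse).reverse

/-- The initial part `i₂(w)`: retain only the first occurrence from the left of
each letter of `w`. -/
def initPart {X : Type*} [DecidableEq X] (w : List X) : List X :=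
  w.reverse.dedup.reverse

/-- The dual `F̄` of a word function `F`: `F̄(w) = reverse (F (reverse w))`. -/
def dualW {X : Type*} (F : List X → List X) (w : List X) : List X :=
  (F w.reverse).reverse

theorem wordS_length_lt {X : Type*} [DecidableEq X] {w : List X} (hw : w ≠ []) :
    (wordS w).length < w.length := by
  have hpos : 0 < w.length := List.length_pos_iff.mpr hw
  have hk : (w.toFinset.sup fun x => w.idxOf x) < w.length := by
    rw [Finset.sup_lt_iff hpos]
    intro x hx
    exact List.idxOf_lt_length_iff.mpr (List.mem_toFinset.mp hx)
  simp only [wordS, List.length_take]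
  omega

/-- The common recursion defining the word functions `h_m` and `i_m` of Gerhard
and Petrich: `t_m(w) = t_m(s(w)) · σ(w) · t̄_{m-1}(w)` for `m ≥ 3`, where the base
function (`h₂` = first letter, `i₂` = initial part) is a parameter, and all
functions send the empty word to the empty word. -/
def tW {X : Type*} [DecidableEq X] (base : List X → List X) : ℕ → List X → List X
  | m, w =>
    if hw : w = [] then []
    else if hm : m ≤ 2 then base w
    else tW base m (wordS w) ++ wordSigma w ++ (tW base (m - 1) w.reverse).reverse
termination_by m w => m + w.length
decreasing_by
  · have := wordS_length_lt hw; omega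
  · simp only [List.length_unattach, List.length_reverse, List.length_attach]; omega

/-- The word function `h_m` (`m ≥ 2`): `h₂(w)` is the first letter of `w`, and
`h_m(w) = h_m(s(w)) · σ(w) · h̄_{m-1}(w)` for `m ≥ 3`. -/
def hW {X : Type*} [DecidableEq X] : ℕ → List X → List X :=
  tW fun w => w.take 1

/-- The word function `i_m` (`m ≥ 2`): `i₂(w)` is the initial part of `w`, and
`i_m(w) = i_m(s(w)) · σ(w) · ī_{m-1}(w)` for `m ≥ 3`. -/
def iW {X : Type*} [DecidableEq X] : ℕ → List X → List X :=
  tW initPart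

/-! ### Operations induced by words -/

/-- Evaluation of a word `w` over the alphabet `X` in a semigroup `S` under the
assignment `a : X → S`, computed in the monoid `WithOne S` (so that the empty word
evaluates to `1` and a nonempty word to the coercion of its value in `S`). -/
def evalW {X S : Type*} [Semigroup S] (a : X → S) (w : List X) : WithOne S :=
  (w.map fun t => (a t : WithOne S)).prod

/-- The identification minor `f_{i j}` of an `n`-ary operation: the `i`-th argument
is replaced by the `j`-th. -/
def minor {α β : Type*} {n : ℕ} (f : (Fin n → α) → β) (i j : Fin n) :
    (Fin n → α) → β :=
  fun a => f (Function.update a i (a j))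

/-- `f` depends on its `i`-th variable. -/
def DependsOnVar {α β : Type*} {n : ℕ} (f : (Fin n → α) → β) (i : Fin n) : Prop :=
  ∃ a b : Fin n → α, (∀ k : Fin n, k ≠ i → a k = b k) ∧ f a ≠ f b

/-- `f : Sⁿ → S` is induced by a (nonempty) word over `X_n = {x_1, …, x_n}`. -/
def InducedByWord {S : Type*} [Semigroup S] {n : ℕ} (f : (Fin n → S) → S) : Prop :=
  ∃ w : List (Fin n), w ≠ [] ∧ ∀ a : Fin n → S, (f a : WithOne S) = evalW a w

/-! ### Auxiliary lemmas -/

section Aux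

variable {X : Type*} [DecidableEq X]

lemma mem_initPart {w : List X} {a : X} : a ∈ initPart w ↔ a ∈ w := by
  simp [initPart]

lemma nodup_initPart (w : List X) : (initPart w).Nodup := by
  simp only [initPart, List.nodup_reverse]
  exact List.nodup_dedup _

lemma dedup_append_singleton (l : List X) (a : X) :
    (l ++ [a]).dedup = l.dedup.filter (· ≠ a) ++ [a] := by
  induction l with
  | nil => simp
  | cons x l ih =>
    by_cases hxa : x = a
    · subst hxa
      rw [List.cons_append, List.dedup_cons_of_mem (by simp), ih]
      by_cases hx : x ∈ l
      · rw [List.dedup_cons_of_mem hx]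
      · rw [List.dedup_cons_of_notMem hx, List.filter_cons]
        simp
    · by_cases hx : x ∈ l
      · rw [List.cons_append, List.dedup_cons_of_mem (by simp [hx]), ih,
          List.dedup_cons_of_mem hx]
      · rw [List.cons_append, List.dedup_cons_of_notMem (by simp [hx, hxa]), ih,
          List.dedup_cons_of_notMem hx, List.filter_cons]
        simp [hxa]

lemma initPart_cons (a : X) (t : List X) :
    initPart (a :: t) = a :: (initPart t).filter (· ≠ a) := by
  simp [initPart, dedup_append_singleton, List.filter_reverse]

lemma indexOf_filter_lt {p : X → Bool} {l : List X} {a b : X} (ha : a ∈ l) (hb : b ∈ l)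
    (hpa : p a = true) (hpb : p b = true) :
    ((l.filter p).idxOf a < (l.filter p).idxOf b ↔ l.idxOf a < l.idxOf b) := by
  induction l with
  | nil => cases ha
  | cons x t ih =>
    rw [List.filter_cons]
    by_cases hpx : p x = true
    · rw [if_pos hpx]
      by_cases hax : a = x
      · subst hax
        by_cases hbx : b = a
        · subst hbx; simp
        · rw [List.idxOf_cons_self, List.idxOf_cons_self,
            List.idxOf_cons_ne _ (Ne.symm hbx), List.idxOf_cons_ne _ (Ne.symm hbx)]
          simp
      · by_cases hbx : b = x
        · subst hbx
          rw [List.idxOf_cons_self, List.idxOf_cons_self,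
            List.idxOf_cons_ne _ (Ne.symm hax), List.idxOf_cons_ne _ (Ne.symm hax)]
          simp
        · have hat : a ∈ t := by
            rcases List.mem_cons.mp ha with h | h
            · exact absurd h hax
            · exact h
          have hbt : b ∈ t := by
            rcases List.mem_cons.mp hb with h | h
            · exact absurd h hbx
            · exact h
          rw [List.idxOf_cons_ne _ (Ne.symm hax), List.idxOf_cons_ne _ (Ne.symm hbx),
            List.idxOf_cons_ne _ (Ne.symm hax), List.idxOf_cons_ne _ (Ne.symm hbx),
            Nat.succ_lt_succ_iff, Nat.succ_lt_succ_iff]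
          exact ih hat hbt
    · rw [if_neg hpx]
      have hax : a ≠ x := fun h => hpx (h ▸ hpa)
      have hbx : b ≠ x := fun h => hpx (h ▸ hpb)
      have hat : a ∈ t := by
        rcases List.mem_cons.mp ha with h | h
        · exact absurd h hax
        · exact h
      have hbt : b ∈ t := by
        rcases List.mem_cons.mp hb with h | h
        · exact absurd h hbx
        · exact h
      rw [List.idxOf_cons_ne _ (Ne.symm hax), List.idxOf_cons_ne _ (Ne.symm hbx),
        Nat.succ_lt_succ_iff]
      exact ih hat hbt

lemma indexOf_initPart_lt {w : List X} {a b : X} (ha : a ∈ w) (hb : b ∈ w) :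
    ((initPart w).idxOf a < (initPart w).idxOf b ↔ w.idxOf a < w.idxOf b) := by
  induction w with
  | nil => cases ha
  | cons x t ih =>
    rw [initPart_cons]
    by_cases hax : a = x
    · subst hax
      by_cases hbx : b = a
      · subst hbx; simp
      · rw [List.idxOf_cons_self, List.idxOf_cons_self,
          List.idxOf_cons_ne _ (Ne.symm hbx), List.idxOf_cons_ne _ (Ne.symm hbx)]
        simp
    · by_cases hbx : b = x
      · subst hbx
        rw [List.idxOf_cons_self, List.idxOf_cons_self,
          List.idxOf_cons_ne _ (Ne.symm hax), List.idxOf_cons_ne _ (Ne.symm hax)]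
        simp
      · have hat : a ∈ t := by
          rcases List.mem_cons.mp ha with h | h
          · exact absurd h hax
          · exact h
        have hbt : b ∈ t := by
          rcases List.mem_cons.mp hb with h | h
          · exact absurd h hbx
          · exact h
        rw [List.idxOf_cons_ne _ (Ne.symm hax), List.idxOf_cons_ne _ (Ne.symm hbx),
          List.idxOf_cons_ne _ (Ne.symm hax), List.idxOf_cons_ne _ (Ne.symm hbx),
          Nat.succ_lt_succ_iff, Nat.succ_lt_succ_iff]
        exact (indexOf_filter_lt (mem_initPart.mpr hat) (mem_initPart.mpr hbt)
          (by simpa using hax) (by simpa using hbx)).trans (ih hat hbt)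

lemma indexOf_subst_of_ne {v : List X} {a i j : X} (hi : a ≠ i) (hj : a ≠ j) :
    (subst v i j).idxOf a = v.idxOf a := by
  induction v with
  | nil => rfl
  | cons x t ih =>
    simp only [subst, List.map_cons] at *
    by_cases hxi : x = i
    · rw [if_pos hxi, List.idxOf_cons_ne _ (Ne.symm hj),
        List.idxOf_cons_ne _ (by rw [hxi]; exact Ne.symm hi), ih]
    · rw [if_neg hxi]
      by_cases hxa : x = a
      · subst hxa; rw [List.idxOf_cons_self, List.idxOf_cons_self]
      · rw [List.idxOf_cons_ne _ hxa, List.idxOf_cons_ne _ hxa, ih]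

lemma indexOf_subst_self {v : List X} {i j : X} (hij : i ≠ j) :
    (subst v i j).idxOf j = min (v.idxOf i) (v.idxOf j) := by
  induction v with
  | nil => rfl
  | cons x t ih =>
    simp only [subst, List.map_cons] at *
    by_cases hxi : x = i
    · subst hxi
      rw [List.idxOf_cons_self, if_pos rfl, List.idxOf_cons_self]
      simp
    · rw [if_neg hxi]
      by_cases hxj : x = j
      · subst hxj
        rw [List.idxOf_cons_self]
        rw [List.idxOf_cons_ne _ hxi, List.idxOf_cons_self]
        simp
      · rw [List.idxOf_cons_ne _ hxj, List.idxOf_cons_ne _ hxi,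
          List.idxOf_cons_ne _ hxj, ih]
        omega

lemma mem_subst_of {v : List X} {a i j : X} (ha : a ∈ v) (hi : a ≠ i) :
    a ∈ subst v i j := by
  simp only [subst, List.mem_map]
  exact ⟨a, ha, if_neg hi⟩

lemma mem_subst_self {v : List X} {i j : X} (hi : i ∈ v) : j ∈ subst v i j := by
  simp only [subst, List.mem_map]
  exact ⟨i, hi, if_pos rfl⟩

lemma of_mem_subst {v : List X} {a i j : X} (h : a ∈ subst v i j) :
    a = j ∨ (a ∈ v ∧ a ≠ i) := by
  simp only [subst, List.mem_map] at h
  obtain ⟨t, ht, rfl⟩ := h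
  by_cases hti : t = i
  · left; rw [if_pos hti]
  · right; rw [if_neg hti]; exact ⟨ht, hti⟩

lemma order_ext : ∀ (l₁ l₂ : List X), l₁.Nodup → l₂.Nodup →
    (∀ a, a ∈ l₁ ↔ a ∈ l₂) →
    (∀ a b, a ∈ l₁ → b ∈ l₁ →
      (l₁.idxOf a < l₁.idxOf b ↔ l₂.idxOf a < l₂.idxOf b)) →
    l₁ = l₂ := by
  intro l₁
  induction l₁ with
  | nil =>
    intro l₂ _ _ hm _
    cases l₂ with
    | nil => rfl
    | cons y s => exact absurd ((hm y).mpr (List.mem_cons_self (a := y) (l := s))) (List.not_mem_nil (a := y))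
  | cons x t ih =>
    intro l₂ h₁ h₂ hm ho
    cases l₂ with
    | nil => exact absurd ((hm x).mp (List.mem_cons_self (a := x) (l := t))) (List.not_mem_nil (a := x))
    | cons y s =>
      have hyx : y = x := by
        by_contra hyx
        have hy1 : y ∈ x :: t := (hm y).mpr (List.mem_cons_self (a := y) (l := s))
        have h0 := ho x y (List.mem_cons_self (a := x) (l := t)) hy1
        rw [List.idxOf_cons_self, List.idxOf_cons_ne t (Ne.symm hyx),
          List.idxOf_cons_self] at h0
        exact absurd (h0.mp (Nat.succ_pos _)) (Nat.not_lt_zero _)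
      subst hyx
      have hxt : y ∉ t := (List.nodup_cons.mp h₁).1
      have hxs : y ∉ s := (List.nodup_cons.mp h₂).1
      congr 1
      apply ih s (List.nodup_cons.mp h₁).2 (List.nodup_cons.mp h₂).2
      · intro a
        constructor
        · intro hat
          rcases List.mem_cons.mp ((hm a).mp (List.mem_cons_of_mem _ hat)) with rfl | h
          · exact absurd hat hxt
          · exact h
        · intro has
          rcases List.mem_cons.mp ((hm a).mpr (List.mem_cons_of_mem _ has)) with rfl | h
          · exact absurd has hxs
          · exact h
      · intro a b hat hbt
        have hax : y ≠ a := fun h => hxt (h ▸ hat)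
        have hbx : y ≠ b := fun h => hxt (h ▸ hbt)
        have h0 := ho a b (List.mem_cons_of_mem _ hat) (List.mem_cons_of_mem _ hbt)
        rwa [List.idxOf_cons_ne t hax, List.idxOf_cons_ne t hbx,
          List.idxOf_cons_ne s hax, List.idxOf_cons_ne s hbx,
          Nat.succ_lt_succ_iff, Nat.succ_lt_succ_iff] at h0

lemma ord_transfer {v₁ v₂ : List X} (h : initPart v₁ = initPart v₂) {a b : X}
    (ha1 : a ∈ v₁) (hb1 : b ∈ v₁) (ha2 : a ∈ v₂) (hb2 : b ∈ v₂) :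
    (v₁.idxOf a < v₁.idxOf b ↔ v₂.idxOf a < v₂.idxOf b) := by
  rw [← indexOf_initPart_lt ha1 hb1, ← indexOf_initPart_lt ha2 hb2, h]

lemma indexOf_map_of_injective {Y : Type*} [DecidableEq Y] {f : X → Y}
    (hf : Function.Injective f) (l : List X) (a : X) :
    (l.map f).idxOf (f a) = l.idxOf a := by
  induction l with
  | nil => rfl
  | cons x t ih =>
    rw [List.map_cons]
    by_cases hxa : x = a
    · subst hxa; rw [List.idxOf_cons_self, List.idxOf_cons_self]
    · rw [List.idxOf_cons_ne _ (fun h => hxa (hf h)), List.idxOf_cons_ne _ hxa, ih]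

lemma exists_pair_avoiding {n : ℕ} (hn : 5 ≤ n) (a b c : Fin n) :
    ∃ p q : Fin n, p < q ∧ p ≠ a ∧ p ≠ b ∧ p ≠ c ∧ q ≠ a ∧ q ≠ b ∧ q ≠ c := by
  have hcard : 1 < (Finset.univ \ {a, b, c} : Finset (Fin n)).card := by
    have h3 : ({a, b, c} : Finset (Fin n)).card ≤ 3 := by
      apply le_trans (Finset.card_insert_le _ _)
      have := Finset.card_insert_le b ({c} : Finset (Fin n))
      simp only [Finset.card_singleton] at this ⊢
      omega
    have hle := Finset.le_card_sdiff ({a, b, c} : Finset (Fin n)) Finset.univ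
    have huniv : (Finset.univ : Finset (Fin n)).card = n := by simp
    omega
  obtain ⟨p, hp, q, hq, hpq⟩ := Finset.one_lt_card.mp hcard
  simp only [Finset.mem_sdiff, Finset.mem_univ, Finset.mem_insert, Finset.mem_singleton,
    true_and, not_or] at hp hq
  rcases lt_or_gt_of_ne hpq with h | h
  · exact ⟨p, q, h, hp.1, hp.2.1, hp.2.2, hq.1, hq.2.1, hq.2.2⟩
  · exact ⟨q, p, h, hq.1, hq.2.1, hq.2.2, hp.1, hp.2.1, hp.2.2⟩

end Aux

/-- The precedence relation extracted from a scheme of words. -/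
def PrecRel (n : ℕ) (w : Fin n → Fin n → List (Fin n)) (a b : Fin n) : Prop :=
  ∃ p q : Fin n, p < q ∧ p ≠ a ∧ p ≠ b ∧ q ≠ a ∧ q ≠ b ∧
    (w p q).idxOf a < (w p q).idxOf b

open Classical in
/-- The rank of a letter under the precedence relation. -/
noncomputable def rankOf (n : ℕ) (w : Fin n → Fin n → List (Fin n)) (a : Fin n) : ℕ :=
  (Finset.univ.filter fun b => PrecRel n w b a).card

/-- An essential `n`-scheme of words (`n ≥ 5`) for the variety of
left regular bands has a unique associated permutation `π` of `{1,…,n}`: for all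
`i < j`, `i₂(w_{ij})` equals the sequence obtained from `(π(1),…,π(n))` by replacing
the entry `i` by `j` and deleting the rightmost of the two resulting occurrences of
`j` (equivalently, `i₂` applied to the substituted list); moreover if the scheme
comes from a word `w` (i.e. `i₂(w^{(ij)}) = i₂(w_{ij})` for all `i < j`) then
`i₂(w) = x_{π(1)} ⋯ x_{π(n)}`. -/
theorem associated_permutation (n : ℕ) (hn : 5 ≤ n)
    (w : Fin n → Fin n → List (Fin n))
    (hc : ∀ i j : Fin n, i < j → (w i j).toFinset = Finset.univ \ {i})
    (hC1 : ∀ i j p q : Fin n, i < j → p < q → i ≠ p → i ≠ q → j ≠ p → j ≠ q →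
      initPart (subst (w i j) p q) = initPart (subst (w p q) i j))
    (hC2 : ∀ i j k : Fin n, i < j → j < k →
      initPart (subst (w i j) j k) = initPart (subst (w j k) i k) ∧
      initPart (subst (w j k) i k) = initPart (subst (w i k) j k)) :
    (∃! π : Equiv.Perm (Fin n), ∀ i j : Fin n, i < j →
      initPart (w i j) = initPart (subst ((List.finRange n).map ⇑π) i j)) ∧
    (∀ π : Equiv.Perm (Fin n),
      (∀ i j : Fin n, i < j →
        initPart (w i j) = initPart (subst ((List.finRange n).map ⇑π) i j)) →
      ∀ w' : List (Fin n), w' ≠ [] →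
        (∀ i j : Fin n, i < j → initPart (subst w' i j) = initPart (w i j)) →
        initPart w' = (List.finRange n).map ⇑π) := by
  classical
  -- membership in the scheme words
  have hmemW_iff : ∀ {i j : Fin n}, i < j → ∀ a : Fin n, a ∈ w i j ↔ a ≠ i := by
    intro i j hij a
    rw [← List.mem_toFinset, hc i j hij]
    simp
  have hmemW : ∀ {i j a : Fin n}, i < j → a ≠ i → a ∈ w i j :=
    fun hij ha => (hmemW_iff hij _).mpr ha
  -- comparison across disjoint pairs
  have hF1a : ∀ {i j p q a b : Fin n}, i < j → p < q → i ≠ p → i ≠ q → j ≠ p → j ≠ q →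
      a ≠ i → a ≠ j → a ≠ p → a ≠ q → b ≠ i → b ≠ j → b ≠ p → b ≠ q →
      ((w i j).idxOf a < (w i j).idxOf b ↔ (w p q).idxOf a < (w p q).idxOf b) := by
    intro i j p q a b hij hpq hip hiq hjp hjq hai haj hap haq hbi hbj hbp hbq
    have h := hC1 i j p q hij hpq hip hiq hjp hjq
    have ht := ord_transfer h
      (mem_subst_of (hmemW hij hai) hap) (mem_subst_of (hmemW hij hbi) hbp)
      (mem_subst_of (hmemW hpq hap) hai) (mem_subst_of (hmemW hpq hbp) hbi)
    rwa [indexOf_subst_of_ne hap haq, indexOf_subst_of_ne hbp hbq,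
      indexOf_subst_of_ne hai haj, indexOf_subst_of_ne hbi hbj] at ht
  -- comparison across pairs sharing a letter
  have hF2 : ∀ {i j k a b : Fin n}, i < j → j < k →
      a ≠ i → a ≠ j → a ≠ k → b ≠ i → b ≠ j → b ≠ k →
      (((w i j).idxOf a < (w i j).idxOf b ↔ (w j k).idxOf a < (w j k).idxOf b) ∧
       ((w j k).idxOf a < (w j k).idxOf b ↔ (w i k).idxOf a < (w i k).idxOf b)) := by
    intro i j k a b hij hjk hai haj hak hbi hbj hbk
    have hik : i < k := hij.trans hjk
    obtain ⟨h1, h2⟩ := hC2 i j k hij hjk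
    constructor
    · have ht := ord_transfer h1
        (mem_subst_of (hmemW hij hai) haj) (mem_subst_of (hmemW hij hbi) hbj)
        (mem_subst_of (hmemW hjk haj) hai) (mem_subst_of (hmemW hjk hbj) hbi)
      rwa [indexOf_subst_of_ne haj hak, indexOf_subst_of_ne hbj hbk,
        indexOf_subst_of_ne hai hak, indexOf_subst_of_ne hbi hbk] at ht
    · have ht := ord_transfer h2
        (mem_subst_of (hmemW hjk haj) hai) (mem_subst_of (hmemW hjk hbj) hbi)
        (mem_subst_of (hmemW hik hai) haj) (mem_subst_of (hmemW hik hbi) hbj)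
      rwa [indexOf_subst_of_ne hai hak, indexOf_subst_of_ne hbi hbk,
        indexOf_subst_of_ne haj hak, indexOf_subst_of_ne hbj hbk] at ht
  -- well-definedness of the comparison
  have hWD : ∀ {p q p' q' a b : Fin n}, p < q → p' < q' →
      p ≠ a → p ≠ b → q ≠ a → q ≠ b → p' ≠ a → p' ≠ b → q' ≠ a → q' ≠ b →
      ((w p q).idxOf a < (w p q).idxOf b ↔ (w p' q').idxOf a < (w p' q').idxOf b) := by
    intro p q p' q' a b hpq hpq' hpa hpb hqa hqb hp'a hp'b hq'a hq'b
    by_cases hpp' : p = p'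
    · subst hpp'
      rcases lt_trichotomy q q' with h | h | h
      · exact ((hF2 hpq h (Ne.symm hpa) (Ne.symm hqa) (Ne.symm hq'a)
          (Ne.symm hpb) (Ne.symm hqb) (Ne.symm hq'b)).1).trans
          ((hF2 hpq h (Ne.symm hpa) (Ne.symm hqa) (Ne.symm hq'a)
          (Ne.symm hpb) (Ne.symm hqb) (Ne.symm hq'b)).2)
      · subst h; exact Iff.rfl
      · exact (((hF2 hpq' h (Ne.symm hpa) (Ne.symm hq'a) (Ne.symm hqa)
          (Ne.symm hpb) (Ne.symm hq'b) (Ne.symm hqb)).1).trans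
          ((hF2 hpq' h (Ne.symm hpa) (Ne.symm hq'a) (Ne.symm hqa)
          (Ne.symm hpb) (Ne.symm hq'b) (Ne.symm hqb)).2)).symm
    · by_cases hqq' : q = q'
      · subst hqq'
        rcases lt_trichotomy p p' with h | h | h
        · exact ((hF2 h hpq' (Ne.symm hpa) (Ne.symm hp'a) (Ne.symm hqa)
            (Ne.symm hpb) (Ne.symm hp'b) (Ne.symm hqb)).2).symm
        · exact absurd h hpp'
        · exact (hF2 h hpq (Ne.symm hp'a) (Ne.symm hpa) (Ne.symm hqa)
            (Ne.symm hp'b) (Ne.symm hpb) (Ne.symm hqb)).2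
      · by_cases hpq'' : p = q'
        · subst hpq''
          exact ((hF2 hpq' hpq (Ne.symm hp'a) (Ne.symm hpa) (Ne.symm hqa)
            (Ne.symm hp'b) (Ne.symm hpb) (Ne.symm hqb)).1).symm
        · by_cases hqp' : q = p'
          · subst hqp'
            exact (hF2 hpq hpq' (Ne.symm hpa) (Ne.symm hqa) (Ne.symm hq'a)
              (Ne.symm hpb) (Ne.symm hqb) (Ne.symm hq'b)).1
          · exact hF1a hpq hpq' hpp' hpq'' hqp' hqq'
              (Ne.symm hpa) (Ne.symm hqa) (Ne.symm hp'a) (Ne.symm hq'a)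
              (Ne.symm hpb) (Ne.symm hqb) (Ne.symm hp'b) (Ne.symm hq'b)
  -- the precedence relation
  have hcmp : ∀ {p q a b : Fin n}, p < q → p ≠ a → p ≠ b → q ≠ a → q ≠ b →
      ((w p q).idxOf a < (w p q).idxOf b ↔ PrecRel n w a b) := by
    intro p q a b hpq hpa hpb hqa hqb
    constructor
    · intro h; exact ⟨p, q, hpq, hpa, hpb, hqa, hqb, h⟩
    · rintro ⟨p', q', hpq', hp'a, hp'b, hq'a, hq'b, h⟩
      exact (hWD hpq hpq' hpa hpb hqa hqb hp'a hp'b hq'a hq'b).mpr h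
  have hirrefl : ∀ a : Fin n, ¬ PrecRel n w a a := by
    rintro a ⟨p, q, _, _, _, _, _, h⟩
    exact lt_irrefl _ h
  have hPrec_ne : ∀ {a b : Fin n}, PrecRel n w a b → a ≠ b := by
    rintro a b h rfl
    exact hirrefl a h
  have htricho : ∀ {a b : Fin n}, a ≠ b → PrecRel n w a b ∨ PrecRel n w b a := by
    intro a b hab
    obtain ⟨p, q, hpq, hpa, hpb, _, hqa, hqb, _⟩ := exists_pair_avoiding hn a b b
    have hamem : a ∈ w p q := hmemW hpq (Ne.symm hpa)
    have hbmem : b ∈ w p q := hmemW hpq (Ne.symm hpb)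
    have hne : (w p q).idxOf a ≠ (w p q).idxOf b :=
      fun h => hab ((List.idxOf_inj (y := b) hamem).mp h)
    rcases lt_or_gt_of_ne hne with h | h
    · exact Or.inl ((hcmp hpq hpa hpb hqa hqb).mp h)
    · exact Or.inr ((hcmp hpq hpb hpa hqb hqa).mp h)
  have hasymm : ∀ {a b : Fin n}, PrecRel n w a b → PrecRel n w b a → False := by
    intro a b h1 h2
    obtain ⟨p, q, hpq, hpa, hpb, hqa, hqb, hlt⟩ := h1
    have := (hcmp hpq hpb hpa hqb hqa).mpr h2
    omega
  have hneg : ∀ {a b : Fin n}, a ≠ b → (¬ PrecRel n w a b ↔ PrecRel n w b a) := by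
    intro a b hab
    constructor
    · intro h; exact (htricho hab).resolve_left h
    · intro h h'; exact hasymm h' h
  have htrans : ∀ {a b c : Fin n}, PrecRel n w a b → PrecRel n w b c → PrecRel n w a c := by
    intro a b c h1 h2
    by_cases hac : a = c
    · subst hac; exact (hasymm h1 h2).elim
    · obtain ⟨p, q, hpq, hpa, hpb, hpc, hqa, hqb, hqc⟩ := exists_pair_avoiding hn a b c
      have l1 := (hcmp hpq hpa hpb hqa hqb).mpr h1
      have l2 := (hcmp hpq hpb hpc hqb hqc).mpr h2
      exact (hcmp hpq hpa hpc hqa hqc).mp (lt_trans l1 l2)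
  -- ranks
  have hrank_lt : ∀ a : Fin n, rankOf n w a < n := by
    intro a
    have hss : (Finset.univ.filter fun b => PrecRel n w b a) ⊂ Finset.univ :=
      Finset.filter_ssubset.mpr ⟨a, Finset.mem_univ a, hirrefl a⟩
    have := Finset.card_lt_card hss
    simpa [rankOf] using this
  have hrank_mono : ∀ {a b : Fin n}, PrecRel n w a b → rankOf n w a < rankOf n w b := by
    intro a b h
    apply Finset.card_lt_card
    rw [Finset.ssubset_iff_of_subset]
    · exact ⟨a, Finset.mem_filter.mpr ⟨Finset.mem_univ a, h⟩,
        fun hmem => hirrefl a (Finset.mem_filter.mp hmem).2⟩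
    · intro x hx
      exact Finset.mem_filter.mpr ⟨Finset.mem_univ x, htrans (Finset.mem_filter.mp hx).2 h⟩
  have hrank_iff : ∀ {a b : Fin n}, PrecRel n w a b ↔ rankOf n w a < rankOf n w b := by
    intro a b
    constructor
    · exact hrank_mono
    · intro h
      rcases eq_or_ne a b with rfl | hab
      · exact absurd h (lt_irrefl _)
      · rcases htricho hab with h' | h'
        · exact h'
        · exact absurd (hrank_mono h') (by omega)
  -- the permutation
  have hrank_inj : Function.Injective (fun a : Fin n => (⟨rankOf n w a, hrank_lt a⟩ : Fin n)) := by
    intro a b h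
    simp only [Fin.mk.injEq] at h
    by_contra hne
    rcases htricho hne with h' | h' <;> [skip; skip] <;>
      · have := hrank_mono h'; omega
  set e : Fin n ≃ Fin n :=
    Equiv.ofBijective _ (Finite.injective_iff_bijective.mp hrank_inj) with he
  set π : Equiv.Perm (Fin n) := e.symm with hπdef
  set L : List (Fin n) := (List.finRange n).map ⇑π with hL
  have hLnodup : L.Nodup := (List.nodup_finRange n).map π.injective
  have hLmem : ∀ a : Fin n, a ∈ L := by
    intro a
    exact List.mem_map.mpr ⟨e a, List.mem_finRange _, by simp [hπdef]⟩
  have hidxL : ∀ a : Fin n, L.idxOf a = rankOf n w a := by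
    intro a
    conv_lhs => rw [show a = π (e a) by simp [hπdef]]
    rw [hL, indexOf_map_of_injective π.injective, List.idxOf_finRange]
    simp [he]
  have hOrdL : ∀ a b : Fin n, (L.idxOf a < L.idxOf b ↔ PrecRel n w a b) := by
    intro a b
    rw [hidxL, hidxL]
    exact hrank_iff.symm
  -- position of j in w i j
  have hF1b : ∀ {i j b : Fin n}, i < j → b ≠ i → b ≠ j →
      ((w i j).idxOf j < (w i j).idxOf b ↔ (PrecRel n w i b ∨ PrecRel n w j b)) := by
    intro i j b hij hbi hbj
    obtain ⟨p, q, hpq, hpi, hpj, hpb, hqi, hqj, hqb⟩ := exists_pair_avoiding hn i j b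
    have h := hC1 i j p q hij hpq (Ne.symm hpi) (Ne.symm hqi) (Ne.symm hpj) (Ne.symm hqj)
    have ht := ord_transfer h
      (mem_subst_of (hmemW hij hij.ne') (Ne.symm hpj))
      (mem_subst_of (hmemW hij hbi) (Ne.symm hpb))
      (mem_subst_self (hmemW hpq (Ne.symm hpi)))
      (mem_subst_of (hmemW hpq (Ne.symm hpb)) hbi)
    rw [indexOf_subst_of_ne (Ne.symm hpj) (Ne.symm hqj),
      indexOf_subst_of_ne (Ne.symm hpb) (Ne.symm hqb),
      indexOf_subst_self hij.ne,
      indexOf_subst_of_ne hbi hbj] at ht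
    rw [ht, min_lt_iff]
    exact or_congr (hcmp hpq hpi hpb hqi hqb) (hcmp hpq hpj hpb hqj hqb)
  -- membership in subst L i j
  have hmemSubstL : ∀ {i j : Fin n}, i < j → ∀ a : Fin n, a ∈ subst L i j ↔ a ≠ i := by
    intro i j hij a
    constructor
    · intro h
      rcases of_mem_subst h with rfl | ⟨_, hne⟩
      · exact hij.ne'
      · exact hne
    · intro ha
      by_cases haj : a = j
      · subst haj; exact mem_subst_self (hLmem i)
      · exact mem_subst_of (hLmem a) ha
  -- order characterization
  have hOrdW : ∀ {i j : Fin n}, i < j → ∀ a b : Fin n, a ≠ i → b ≠ i →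
      ((w i j).idxOf a < (w i j).idxOf b ↔
        (subst L i j).idxOf a < (subst L i j).idxOf b) := by
    intro i j hij a b hai hbi
    rcases eq_or_ne a b with rfl | hab
    · simp
    by_cases haj : a = j
    · subst haj
      rw [indexOf_subst_self hij.ne, indexOf_subst_of_ne hbi (Ne.symm hab), min_lt_iff,
        hidxL, hidxL, hidxL]
      rw [hF1b hij hbi (Ne.symm hab)]
      exact or_congr hrank_iff hrank_iff
    · by_cases hbj : b = j
      · subst hbj
        rw [indexOf_subst_self hij.ne, indexOf_subst_of_ne hai haj, lt_min_iff,
          hidxL, hidxL, hidxL]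
        have hmem_a : a ∈ w i b := hmemW hij hai
        have hmem_b : b ∈ w i b := hmemW hij hbi
        have hne : (w i b).idxOf a ≠ (w i b).idxOf b :=
          fun h => hab ((List.idxOf_inj (y := b) hmem_a).mp h)
        have h1 : (w i b).idxOf a < (w i b).idxOf b ↔
            ¬ ((w i b).idxOf b < (w i b).idxOf a) := by omega
        rw [h1, hF1b hij hai haj, not_or, hneg (Ne.symm hai), hneg (Ne.symm haj)]
        constructor
        · rintro ⟨x, y⟩; exact ⟨hrank_iff.mp x, hrank_iff.mp y⟩
        · rintro ⟨x, y⟩; exact ⟨hrank_iff.mpr x, hrank_iff.mpr y⟩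
      · rw [indexOf_subst_of_ne hai haj, indexOf_subst_of_ne hbi hbj]
        rw [hcmp hij (Ne.symm hai) (Ne.symm hbi) (Ne.symm haj) (Ne.symm hbj), hOrdL]
  -- existence
  have hgoal1 : ∀ i j : Fin n, i < j → initPart (w i j) = initPart (subst L i j) := by
    intro i j hij
    apply order_ext _ _ (nodup_initPart _) (nodup_initPart _)
    · intro a
      rw [mem_initPart, mem_initPart, hmemW_iff hij, hmemSubstL hij]
    · intro a b ha hb
      rw [mem_initPart] at ha hb
      have hai : a ≠ i := (hmemW_iff hij a).mp ha
      have hbi : b ≠ i := (hmemW_iff hij b).mp hb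
      rw [indexOf_initPart_lt ha hb,
        indexOf_initPart_lt ((hmemSubstL hij a).mpr hai) ((hmemSubstL hij b).mpr hbi)]
      exact hOrdW hij a b hai hbi
  -- the general comparison against any suitable permutation list
  have hcompare : ∀ (M : List (Fin n)), (∀ a : Fin n, a ∈ M) →
      (∀ i j : Fin n, i < j → initPart (w i j) = initPart (subst M i j)) →
      ∀ a b : Fin n, a ≠ b →
      (M.idxOf a < M.idxOf b ↔ PrecRel n w a b) := by
    intro M hMmem hMsch a b hab
    obtain ⟨p, q, hpq, hpa, hpb, _, hqa, hqb, _⟩ := exists_pair_avoiding hn a b b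
    have ht := ord_transfer (hMsch p q hpq)
      (hmemW hpq (Ne.symm hpa)) (hmemW hpq (Ne.symm hpb))
      (mem_subst_of (hMmem a) (Ne.symm hpa)) (mem_subst_of (hMmem b) (Ne.symm hpb))
    rw [indexOf_subst_of_ne (Ne.symm hpa) (Ne.symm hqa),
      indexOf_subst_of_ne (Ne.symm hpb) (Ne.symm hqb)] at ht
    rw [← ht]
    exact hcmp hpq hpa hpb hqa hqb
  refine ⟨⟨π, hgoal1, ?_⟩, ?_⟩
  · -- uniqueness
    intro π' hπ'
    set L' : List (Fin n) := (List.finRange n).map ⇑π' with hL'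
    have hL'nodup : L'.Nodup := (List.nodup_finRange n).map π'.injective
    have hL'mem : ∀ a : Fin n, a ∈ L' := by
      intro a
      exact List.mem_map.mpr ⟨π'.symm a, List.mem_finRange _, by simp⟩
    have hLL' : L' = L := by
      apply order_ext _ _ hL'nodup hLnodup (fun a => by simp [hL'mem a, hLmem a])
      intro a b ha hb
      rcases eq_or_ne a b with rfl | hab
      · simp
      rw [hcompare L' hL'mem hπ' a b hab, hOrdL]
    have hpieq : ∀ k : Fin n, π' k = π k :=
      fun k => List.map_eq_map_iff.mp hLL' k (List.mem_finRange k)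
    exact Equiv.ext hpieq
  · -- the word case
    intro π₀ hπ₀ w' hw'ne hsch
    set L₀ : List (Fin n) := (List.finRange n).map ⇑π₀ with hL₀
    have hL₀nodup : L₀.Nodup := (List.nodup_finRange n).map π₀.injective
    have hL₀mem : ∀ a : Fin n, a ∈ L₀ := by
      intro a
      exact List.mem_map.mpr ⟨π₀.symm a, List.mem_finRange _, by simp⟩
    have hw'mem : ∀ a : Fin n, a ∈ w' := by
      intro a
      obtain ⟨p, q, hpq, hpa, _, _, hqa, _, _⟩ := exists_pair_avoiding hn a a a
      have hmem : a ∈ initPart (w p q) := mem_initPart.mpr (hmemW hpq (Ne.symm hpa))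
      rw [← hsch p q hpq] at hmem
      rcases of_mem_subst (mem_initPart.mp hmem) with heq | ⟨h, _⟩
      · exact absurd heq.symm hqa
      · exact h
    apply order_ext _ _ (nodup_initPart _) hL₀nodup
    · intro a
      rw [mem_initPart]
      simp [hw'mem a, hL₀mem a]
    · intro a b ha hb
      rw [mem_initPart] at ha hb
      rcases eq_or_ne a b with rfl | hab
      · simp
      rw [indexOf_initPart_lt (hw'mem a) (hw'mem b)]
      obtain ⟨p, q, hpq, hpa, hpb, _, hqa, hqb, _⟩ := exists_pair_avoiding hn a b b
      have h1 : w'.idxOf a < w'.idxOf b ↔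
          (w p q).idxOf a < (w p q).idxOf b := by
        have ht := ord_transfer (hsch p q hpq)
          (mem_subst_of (hw'mem a) (Ne.symm hpa)) (mem_subst_of (hw'mem b) (Ne.symm hpb))
          (hmemW hpq (Ne.symm hpa)) (hmemW hpq (Ne.symm hpb))
        rwa [indexOf_subst_of_ne (Ne.symm hpa) (Ne.symm hqa),
          indexOf_subst_of_ne (Ne.symm hpb) (Ne.symm hqb)] at ht
      rw [h1, hcmp hpq hpa hpb hqa hqb,
        ← hcompare L₀ hL₀mem hπ₀ a b hab]
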